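/- For any MAC W : X1 × X2 → Y on finite alphabets and positive integers k1, k2, the non-signaling assisted success probability S^NS(W,k1,k2) equals the value of the following linear program: maximize (1/(k1 k2)) Σ_{x1,x2,y} W(y|x1,x2) r_{x1,x2,y} over real families r, r^1, r^2 (indexed by X1×X2×Y) and p (indexed by X1×X2) subject to: Σ_{x1,x2} r_{x1,x2,y} = 1 for all y; Σ_{x1} r^1_{x1,x2,y} = k1 Σ_{x1} r_{x1,x2,y} for all x2,y; Σ_{x2} r^2_{x1,x2,y} = k2 Σ_{x2} r_{x1,x2,y} for all x1,y; Σ_{x1} p_{x1,x2} = k1 Σ_{x1} r^2_{x1,x2,y} for all x2,y; Σ_{x2} p_{x1,x2} = k2 Σ_{x2} r^1_{x1,x2,y} for all x1,y; 0 ≤ r_{x1,x2,y}, r_{x1,x2,y} ≤ r^1_{x1,x2,y} ≤ p_{x1,x2}, r_{x1,x2,y} ≤ r^2_{x1,x2,y} ≤ p_{x1,x2}; and p_{x1,x2} − r^1_{x1,x2,y} − r^2_{x1,x2,y} + r_{x1,x2,y} ≥ 0 for all x1,x2,y. -/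

import Mathlib

open Finset


private lemma fin2le {n : ℕ} {a b : Fin n} (h : a ≠ b) : 2 ≤ n := by
  have h1 := a.isLt
  have h2 := b.isLt
  have h3 : (a : ℕ) ≠ (b : ℕ) := fun hv => h (Fin.ext hv)
  omega

private lemma sumIte {n : ℕ} (i : Fin n) (v w : ℝ) :
    ∑ j : Fin n, (if j = i then v else w) = v + ((n : ℝ) - 1) * w := by
  have h : ∀ j : Fin n, (if j = i then v else w) = (if j = i then v - w else 0) + w := by
    intro j; by_cases hj : j = i <;> simp [hj]
  rw [Finset.sum_congr rfl fun j _ => h j, Finset.sum_add_distrib,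
    Finset.sum_ite_eq' univ i (fun _ => v - w), if_pos (mem_univ i),
    Finset.sum_const, Finset.card_univ, Fintype.card_fin, nsmul_eq_mul]
  ring

private lemma rot3 {α β γ : Type*} [Fintype α] [Fintype β] [Fintype γ]
    (f : α → β → γ → ℝ) :
    ∑ a, ∑ b, ∑ c, f a b c = ∑ b, ∑ c, ∑ a, f a b c := by
  rw [Finset.sum_comm]
  exact Finset.sum_congr rfl fun b _ => Finset.sum_comm

private lemma rot4 {α β γ δ : Type*} [Fintype α] [Fintype β] [Fintype γ] [Fintype δ]
    (f : α → β → γ → δ → ℝ) :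
    ∑ a, ∑ b, ∑ c, ∑ d, f a b c d = ∑ b, ∑ c, ∑ d, ∑ a, f a b c d := by
  rw [rot3 fun a b c => ∑ d, f a b c d]
  exact Finset.sum_congr rfl fun b _ => Finset.sum_congr rfl fun c _ => Finset.sum_comm

private lemma rot5 {α β γ δ ε : Type*} [Fintype α] [Fintype β] [Fintype γ] [Fintype δ]
    [Fintype ε] (f : α → β → γ → δ → ε → ℝ) :
    ∑ a, ∑ b, ∑ c, ∑ d, ∑ e, f a b c d e = ∑ b, ∑ c, ∑ d, ∑ e, ∑ a, f a b c d e := by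
  rw [rot4 fun a b c d => ∑ e, f a b c d e]
  exact Finset.sum_congr rfl fun b _ => Finset.sum_congr rfl fun c _ =>
    Finset.sum_congr rfl fun d _ => Finset.sum_comm

private lemma ie_nonneg {n m : ℕ} (f : Fin n → Fin m → ℝ) (hf : ∀ a b, 0 ≤ f a b)
    (i : Fin n) (j : Fin m) :
    0 ≤ (∑ a, ∑ b, f a b) - (∑ a, f a j) - (∑ b, f i b) + f i j := by
  have hb : ∀ g : Fin m → ℝ, ∑ b, g b = g j + ∑ b ∈ univ.erase j, g b := fun g =>
    (Finset.add_sum_erase _ g (mem_univ j)).symm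
  have ha : ∀ g : Fin n → ℝ, ∑ a, g a = g i + ∑ a ∈ univ.erase i, g a := fun g =>
    (Finset.add_sum_erase _ g (mem_univ i)).symm
  have e1 : ∑ a, ∑ b, f a b = (∑ b, f i b) + ∑ a ∈ univ.erase i, ∑ b, f a b := ha _
  have e2 : ∑ a, f a j = f i j + ∑ a ∈ univ.erase i, f a j := ha _
  have e3 : ∑ b, f i b = f i j + ∑ b ∈ univ.erase j, f i b := hb _
  have e4 : ∑ a ∈ univ.erase i, ∑ b, f a b
      = ∑ a ∈ univ.erase i, (f a j + ∑ b ∈ univ.erase j, f a b) :=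
    Finset.sum_congr rfl fun a _ => hb (f a)
  have key : (∑ a, ∑ b, f a b) - (∑ a, f a j) - (∑ b, f i b) + f i j
      = ∑ a ∈ univ.erase i, ∑ b ∈ univ.erase j, f a b := by
    rw [e1, e2, e3, e4, Finset.sum_add_distrib]; ring
  rw [key]
  exact Finset.sum_nonneg fun a _ => Finset.sum_nonneg fun b _ => hf a b

private lemma cast_sub_one_ne {n : ℕ} (h : 2 ≤ n) : ((n:ℝ) - 1) ≠ 0 := by
  have h' : (2:ℝ) ≤ (n:ℝ) := by exact_mod_cast h
  intro h0; linarith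

section BoxDef
variable {X1 X2 Y : Type*}

private noncomputable def boxOf (k1 k2 : ℕ) (r r1 r2 : X1 → X2 → Y → ℝ) (p : X1 → X2 → ℝ)
    (x1 : X1) (x2 : X2) (j1 : Fin k1) (j2 : Fin k2) (i1 : Fin k1) (i2 : Fin k2) (y : Y) : ℝ :=
  if j1 = i1 then
    (if j2 = i2 then r x1 x2 y / ((k1:ℝ) * (k2:ℝ))
     else (r2 x1 x2 y - r x1 x2 y) / ((k1:ℝ) * (k2:ℝ) * ((k2:ℝ) - 1)))
  else
    (if j2 = i2 then (r1 x1 x2 y - r x1 x2 y) / ((k1:ℝ) * (k2:ℝ) * ((k1:ℝ) - 1))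
     else (p x1 x2 - r1 x1 x2 y - r2 x1 x2 y + r x1 x2 y) /
       ((k1:ℝ) * (k2:ℝ) * ((k1:ℝ) - 1) * ((k2:ℝ) - 1)))

private lemma boxOf_row {k1 k2 : ℕ} (hk1 : 0 < k1) (hk2 : 0 < k2)
    (r r1 r2 : X1 → X2 → Y → ℝ) (p : X1 → X2 → ℝ) (x1 : X1) (x2 : X2) (y : Y)
    (hd21 : k2 = 1 → r2 x1 x2 y = r x1 x2 y)
    (hd22 : k2 = 1 → r1 x1 x2 y = p x1 x2)
    (j1 i1 : Fin k1) (i2 : Fin k2) :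
    ∑ j2, boxOf k1 k2 r r1 r2 p x1 x2 j1 j2 i1 i2 y =
      if j1 = i1 then r2 x1 x2 y / ((k1:ℝ) * (k2:ℝ))
      else (p x1 x2 - r2 x1 x2 y) / ((k1:ℝ) * (k2:ℝ) * ((k1:ℝ) - 1)) := by
  have hk1ne : ((k1:ℝ)) ≠ 0 := Nat.cast_ne_zero.mpr hk1.ne'
  have hk2ne : ((k2:ℝ)) ≠ 0 := Nat.cast_ne_zero.mpr hk2.ne'
  by_cases hj : j1 = i1
  · simp only [boxOf, if_pos hj]
    rw [sumIte]
    by_cases hk2' : k2 = 1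
    · subst hk2'
      rw [hd21 rfl]
      norm_num
    · have hne := cast_sub_one_ne (show 2 ≤ k2 by omega)
      field_simp
      ring
  · have hk1two : 2 ≤ k1 := fin2le hj
    have hne1 := cast_sub_one_ne hk1two
    simp only [boxOf, if_neg hj]
    rw [sumIte]
    by_cases hk2' : k2 = 1
    · subst hk2'
      rw [hd22 rfl, hd21 rfl]
      norm_num
    · have hne := cast_sub_one_ne (show 2 ≤ k2 by omega)
      field_simp
      ring

private lemma boxOf_col {k1 k2 : ℕ} (hk1 : 0 < k1) (hk2 : 0 < k2)
    (r r1 r2 : X1 → X2 → Y → ℝ) (p : X1 → X2 → ℝ) (x1 : X1) (x2 : X2) (y : Y)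
    (hd11 : k1 = 1 → r1 x1 x2 y = r x1 x2 y)
    (hd12 : k1 = 1 → r2 x1 x2 y = p x1 x2)
    (i1 : Fin k1) (j2 i2 : Fin k2) :
    ∑ j1, boxOf k1 k2 r r1 r2 p x1 x2 j1 j2 i1 i2 y =
      if j2 = i2 then r1 x1 x2 y / ((k1:ℝ) * (k2:ℝ))
      else (p x1 x2 - r1 x1 x2 y) / ((k1:ℝ) * (k2:ℝ) * ((k2:ℝ) - 1)) := by
  have hk1ne : ((k1:ℝ)) ≠ 0 := Nat.cast_ne_zero.mpr hk1.ne'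
  have hk2ne : ((k2:ℝ)) ≠ 0 := Nat.cast_ne_zero.mpr hk2.ne'
  by_cases hj : j2 = i2
  · simp only [boxOf, if_pos hj]
    rw [sumIte]
    by_cases hk1' : k1 = 1
    · subst hk1'
      rw [hd11 rfl]
      norm_num
    · have hne := cast_sub_one_ne (show 2 ≤ k1 by omega)
      field_simp
      ring
  · have hk2two : 2 ≤ k2 := fin2le hj
    have hne2 := cast_sub_one_ne hk2two
    simp only [boxOf, if_neg hj]
    rw [sumIte]
    by_cases hk1' : k1 = 1
    · subst hk1'
      rw [hd12 rfl, hd11 rfl]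
      norm_num
    · have hne := cast_sub_one_ne (show 2 ≤ k1 by omega)
      field_simp
      ring

private lemma boxOf_tot {k1 k2 : ℕ} (hk1 : 0 < k1) (hk2 : 0 < k2)
    (r r1 r2 : X1 → X2 → Y → ℝ) (p : X1 → X2 → ℝ) (x1 : X1) (x2 : X2) (y : Y)
    (hd21 : k2 = 1 → r2 x1 x2 y = r x1 x2 y)
    (hd22 : k2 = 1 → r1 x1 x2 y = p x1 x2)
    (hd12 : k1 = 1 → r2 x1 x2 y = p x1 x2)
    (i1 : Fin k1) (i2 : Fin k2) :
    ∑ j1, ∑ j2, boxOf k1 k2 r r1 r2 p x1 x2 j1 j2 i1 i2 y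
      = p x1 x2 / ((k1:ℝ) * (k2:ℝ)) := by
  have hk1ne : ((k1:ℝ)) ≠ 0 := Nat.cast_ne_zero.mpr hk1.ne'
  have hk2ne : ((k2:ℝ)) ≠ 0 := Nat.cast_ne_zero.mpr hk2.ne'
  rw [Finset.sum_congr rfl fun j1 _ => boxOf_row hk1 hk2 r r1 r2 p x1 x2 y hd21 hd22 j1 i1 i2]
  rw [sumIte]
  by_cases hk1' : k1 = 1
  · subst hk1'
    rw [hd12 rfl]
    norm_num
  · have hne := cast_sub_one_ne (show 2 ≤ k1 by omega)
    field_simp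
    ring

private lemma boxOf_eq2 {k1 k2 : ℕ} (r r1 r2 : X1 → X2 → Y → ℝ) (p : X1 → X2 → ℝ)
    (x1 : X1) (x2 : X2) (y : Y) {j1 i1 : Fin k1} {j2 i2 : Fin k2} (h : j2 = i2) :
    boxOf k1 k2 r r1 r2 p x1 x2 j1 j2 i1 i2 y =
      if j1 = i1 then r x1 x2 y / ((k1:ℝ) * (k2:ℝ))
      else (r1 x1 x2 y - r x1 x2 y) / ((k1:ℝ) * (k2:ℝ) * ((k1:ℝ) - 1)) := by
  unfold boxOf
  by_cases hj1 : j1 = i1 <;> simp [hj1, h]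

private lemma boxOf_ne2 {k1 k2 : ℕ} (r r1 r2 : X1 → X2 → Y → ℝ) (p : X1 → X2 → ℝ)
    (x1 : X1) (x2 : X2) (y : Y) {j1 i1 : Fin k1} {j2 i2 : Fin k2} (h : ¬ j2 = i2) :
    boxOf k1 k2 r r1 r2 p x1 x2 j1 j2 i1 i2 y =
      if j1 = i1 then (r2 x1 x2 y - r x1 x2 y) / ((k1:ℝ) * (k2:ℝ) * ((k2:ℝ) - 1))
      else (p x1 x2 - r1 x1 x2 y - r2 x1 x2 y + r x1 x2 y) /
        ((k1:ℝ) * (k2:ℝ) * ((k1:ℝ) - 1) * ((k2:ℝ) - 1)) := by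
  unfold boxOf
  by_cases hj1 : j1 = i1 <;> simp [hj1, h]
end BoxDef


/-- A tripartite non-signaling box `P(x1,x2,(j1,j2)|i1,i2,y)` between the two senders
and the receiver, with `k1` and `k2` messages.  Arguments of `P` are in the order
`x1 x2 j1 j2 i1 i2 y`. -/
def IsNSBox {X1 X2 Y : Type*} [Fintype X1] [Fintype X2] [Fintype Y] (k1 k2 : ℕ)
    (P : X1 → X2 → Fin k1 → Fin k2 → Fin k1 → Fin k2 → Y → ℝ) : Prop :=
  (∀ x1 x2 j1 j2 i1 i2 y, 0 ≤ P x1 x2 j1 j2 i1 i2 y) ∧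
  (∀ i1 i2 y, ∑ x1, ∑ x2, ∑ j1, ∑ j2, P x1 x2 j1 j2 i1 i2 y = 1) ∧
  (∀ x2 j1 j2 i1 i1' i2 y,
    ∑ x1, P x1 x2 j1 j2 i1 i2 y = ∑ x1, P x1 x2 j1 j2 i1' i2 y) ∧
  (∀ x1 j1 j2 i1 i2 i2' y,
    ∑ x2, P x1 x2 j1 j2 i1 i2 y = ∑ x2, P x1 x2 j1 j2 i1 i2' y) ∧
  (∀ x1 x2 i1 i2 y y',
    ∑ j1, ∑ j2, P x1 x2 j1 j2 i1 i2 y = ∑ j1, ∑ j2, P x1 x2 j1 j2 i1 i2 y')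

/-- `S^{NS}(W,k1,k2)`: maximum joint success probability with (tripartite)
non-signaling assistance between both senders and the receiver. -/
noncomputable def SNS {X1 X2 Y : Type*} [Fintype X1] [Fintype X2] [Fintype Y]
    (W : X1 → X2 → Y → ℝ) (k1 k2 : ℕ) : ℝ :=
  sSup {s : ℝ | ∃ P : X1 → X2 → Fin k1 → Fin k2 → Fin k1 → Fin k2 → Y → ℝ,
    IsNSBox k1 k2 P ∧
    s = (1 / ((k1 : ℝ) * (k2 : ℝ))) * ∑ i1, ∑ i2, ∑ x1, ∑ x2, ∑ y,
      W x1 x2 y * P x1 x2 i1 i2 i1 i2 y}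

/-- `S^{NS}(W,k1,k2)` equals the value of the symmetrized linear program of
Proposition `prop:NSLP`. -/
theorem SNS_eq_LP {X1 X2 Y : Type*} [Fintype X1] [Fintype X2] [Fintype Y]
    (W : X1 → X2 → Y → ℝ)
    (hW0 : ∀ x1 x2 y, 0 ≤ W x1 x2 y)
    (hW1 : ∀ x1 x2, ∑ y, W x1 x2 y = 1)
    (k1 k2 : ℕ) (hk1 : 0 < k1) (hk2 : 0 < k2) :
    SNS W k1 k2 =
      sSup {s : ℝ | ∃ (r r1 r2 : X1 → X2 → Y → ℝ) (p : X1 → X2 → ℝ),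
        (∀ y, ∑ x1, ∑ x2, r x1 x2 y = 1) ∧
        (∀ x2 y, ∑ x1, r1 x1 x2 y = (k1 : ℝ) * ∑ x1, r x1 x2 y) ∧
        (∀ x1 y, ∑ x2, r2 x1 x2 y = (k2 : ℝ) * ∑ x2, r x1 x2 y) ∧
        (∀ x2 y, ∑ x1, p x1 x2 = (k1 : ℝ) * ∑ x1, r2 x1 x2 y) ∧
        (∀ x1 y, ∑ x2, p x1 x2 = (k2 : ℝ) * ∑ x2, r1 x1 x2 y) ∧
        (∀ x1 x2 y, 0 ≤ r x1 x2 y) ∧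
        (∀ x1 x2 y, r x1 x2 y ≤ r1 x1 x2 y) ∧ (∀ x1 x2 y, r1 x1 x2 y ≤ p x1 x2) ∧
        (∀ x1 x2 y, r x1 x2 y ≤ r2 x1 x2 y) ∧ (∀ x1 x2 y, r2 x1 x2 y ≤ p x1 x2) ∧
        (∀ x1 x2 y, 0 ≤ p x1 x2 - r1 x1 x2 y - r2 x1 x2 y + r x1 x2 y) ∧
        s = (1 / ((k1 : ℝ) * (k2 : ℝ))) * ∑ x1, ∑ x2, ∑ y,
          W x1 x2 y * r x1 x2 y} := by
  unfold SNS
  congr 1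
  ext s
  simp only [Set.mem_setOf_eq]
  constructor
  · rintro ⟨P, hbox, hs⟩
    obtain ⟨hP0, hPn, hN1, hN2, hNr⟩ := hbox
    rcases isEmpty_or_nonempty Y with hY | hY
    · refine ⟨fun _ _ _ => 0, fun _ _ _ => 0, fun _ _ _ => 0, fun _ _ => 0,
        fun y => isEmptyElim y, fun _ y => isEmptyElim y, fun _ y => isEmptyElim y,
        fun _ y => isEmptyElim y, fun _ y => isEmptyElim y, fun _ _ y => isEmptyElim y,
        fun _ _ y => isEmptyElim y, fun _ _ y => isEmptyElim y, fun _ _ y => isEmptyElim y,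
        fun _ _ y => isEmptyElim y, fun _ _ y => isEmptyElim y, ?_⟩
      rw [hs]
      simp
    · obtain ⟨y0⟩ := hY
      set i10 : Fin k1 := ⟨0, hk1⟩ with hi10
      set i20 : Fin k2 := ⟨0, hk2⟩ with hi20
      refine ⟨fun x1 x2 y => ∑ i1, ∑ i2, P x1 x2 i1 i2 i1 i2 y,
        fun x1 x2 y => ∑ i1, ∑ i2, ∑ j1, P x1 x2 j1 i2 i1 i2 y,
        fun x1 x2 y => ∑ i1, ∑ i2, ∑ j2, P x1 x2 i1 j2 i1 i2 y,
        fun x1 x2 => ∑ i1, ∑ i2, ∑ j1, ∑ j2, P x1 x2 j1 j2 i1 i2 y0,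
        ?_, ?_, ?_, ?_, ?_, ?_, ?_, ?_, ?_, ?_, ?_, ?_⟩
      -- (C1)
      · intro y
        calc ∑ x1, ∑ x2, ∑ i1, ∑ i2, P x1 x2 i1 i2 i1 i2 y
            = ∑ i1, ∑ i2, ∑ x1, ∑ x2, P x1 x2 i1 i2 i1 i2 y := by rw [rot4, rot4]
          _ = ∑ i1, ∑ i2, ∑ x1, ∑ x2, P x1 x2 i1 i2 i10 i20 y := by
              refine Finset.sum_congr rfl fun i1 _ => Finset.sum_congr rfl fun i2 _ => ?_
              calc ∑ x1, ∑ x2, P x1 x2 i1 i2 i1 i2 y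
                  = ∑ x2, ∑ x1, P x1 x2 i1 i2 i1 i2 y := Finset.sum_comm
                _ = ∑ x2, ∑ x1, P x1 x2 i1 i2 i10 i2 y :=
                    Finset.sum_congr rfl fun x2 _ => hN1 x2 i1 i2 i1 i10 i2 y
                _ = ∑ x1, ∑ x2, P x1 x2 i1 i2 i10 i2 y := Finset.sum_comm
                _ = ∑ x1, ∑ x2, P x1 x2 i1 i2 i10 i20 y :=
                    Finset.sum_congr rfl fun x1 _ => hN2 x1 i1 i2 i10 i2 i20 y
          _ = 1 := by
              have h := hPn i10 i20 y
              rw [rot4, rot4] at h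
              exact h
      -- (C2)
      · intro x2 y
        calc ∑ x1, ∑ i1, ∑ i2, ∑ j1, P x1 x2 j1 i2 i1 i2 y
            = ∑ i1, ∑ i2, ∑ j1, ∑ x1, P x1 x2 j1 i2 i1 i2 y := rot4 _
          _ = ∑ i1, ∑ i2, ∑ j1, ∑ x1, P x1 x2 j1 i2 i10 i2 y :=
              Finset.sum_congr rfl fun i1 _ => Finset.sum_congr rfl fun i2 _ =>
                Finset.sum_congr rfl fun j1 _ => hN1 x2 j1 i2 i1 i10 i2 y
          _ = (k1 : ℝ) * ∑ i2, ∑ j1, ∑ x1, P x1 x2 j1 i2 i10 i2 y := by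
              rw [Finset.sum_const, Finset.card_univ, Fintype.card_fin, nsmul_eq_mul]
          _ = (k1 : ℝ) * ∑ i1, ∑ i2, ∑ x1, P x1 x2 i1 i2 i10 i2 y := by
              rw [Finset.sum_comm]
          _ = (k1 : ℝ) * ∑ i1, ∑ i2, ∑ x1, P x1 x2 i1 i2 i1 i2 y := by
              rw [Finset.sum_congr rfl fun i1 _ => Finset.sum_congr rfl fun i2 _ =>
                (hN1 x2 i1 i2 i1 i10 i2 y).symm]
          _ = (k1 : ℝ) * ∑ x1, ∑ i1, ∑ i2, P x1 x2 i1 i2 i1 i2 y :=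
              congrArg _ (rot3 fun x1 i1 i2 => P x1 x2 i1 i2 i1 i2 y).symm
      -- (C3)
      · intro x1 y
        calc ∑ x2, ∑ i1, ∑ i2, ∑ j2, P x1 x2 i1 j2 i1 i2 y
            = ∑ i1, ∑ i2, ∑ j2, ∑ x2, P x1 x2 i1 j2 i1 i2 y := rot4 _
          _ = ∑ i1, ∑ i2, ∑ j2, ∑ x2, P x1 x2 i1 j2 i1 i20 y :=
              Finset.sum_congr rfl fun i1 _ => Finset.sum_congr rfl fun i2 _ =>
                Finset.sum_congr rfl fun j2 _ => hN2 x1 i1 j2 i1 i2 i20 y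
          _ = ∑ i1, (k2 : ℝ) * ∑ j2, ∑ x2, P x1 x2 i1 j2 i1 i20 y := by
              refine Finset.sum_congr rfl fun i1 _ => ?_
              rw [Finset.sum_const, Finset.card_univ, Fintype.card_fin, nsmul_eq_mul]
          _ = (k2 : ℝ) * ∑ i1, ∑ i2, ∑ x2, P x1 x2 i1 i2 i1 i20 y := by
              rw [Finset.mul_sum]
          _ = (k2 : ℝ) * ∑ i1, ∑ i2, ∑ x2, P x1 x2 i1 i2 i1 i2 y := by
              rw [Finset.sum_congr rfl fun i1 _ => Finset.sum_congr rfl fun i2 _ =>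
                (hN2 x1 i1 i2 i1 i20 i2 y).symm]
          _ = (k2 : ℝ) * ∑ x2, ∑ i1, ∑ i2, P x1 x2 i1 i2 i1 i2 y :=
              congrArg _ (rot3 fun x2 i1 i2 => P x1 x2 i1 i2 i1 i2 y).symm
      -- (C4)
      · intro x2 y
        calc ∑ x1, ∑ i1, ∑ i2, ∑ j1, ∑ j2, P x1 x2 j1 j2 i1 i2 y0
            = ∑ i1, ∑ i2, ∑ j1, ∑ j2, ∑ x1, P x1 x2 j1 j2 i1 i2 y0 := rot5 _
          _ = ∑ i1, ∑ i2, ∑ j1, ∑ j2, ∑ x1, P x1 x2 j1 j2 i10 i2 y0 :=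
              Finset.sum_congr rfl fun i1 _ => Finset.sum_congr rfl fun i2 _ =>
                Finset.sum_congr rfl fun j1 _ => Finset.sum_congr rfl fun j2 _ =>
                  hN1 x2 j1 j2 i1 i10 i2 y0
          _ = (k1 : ℝ) * ∑ i2, ∑ j1, ∑ j2, ∑ x1, P x1 x2 j1 j2 i10 i2 y0 := by
              rw [Finset.sum_const, Finset.card_univ, Fintype.card_fin, nsmul_eq_mul]
          _ = (k1 : ℝ) * ∑ i2, ∑ j1, ∑ j2, ∑ x1, P x1 x2 j1 j2 i10 i2 y := by
              refine congrArg _ (Finset.sum_congr rfl fun i2 _ => ?_)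
              rw [← rot3 fun x1 j1 j2 => P x1 x2 j1 j2 i10 i2 y0,
                ← rot3 fun x1 j1 j2 => P x1 x2 j1 j2 i10 i2 y]
              exact Finset.sum_congr rfl fun x1 _ => hNr x1 x2 i10 i2 y0 y
          _ = (k1 : ℝ) * ∑ i2, ∑ i1, ∑ j2, ∑ x1, P x1 x2 i1 j2 i10 i2 y := rfl
          _ = (k1 : ℝ) * ∑ i1, ∑ i2, ∑ j2, ∑ x1, P x1 x2 i1 j2 i10 i2 y := by
              rw [Finset.sum_comm]
          _ = (k1 : ℝ) * ∑ i1, ∑ i2, ∑ j2, ∑ x1, P x1 x2 i1 j2 i1 i2 y := by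
              rw [Finset.sum_congr rfl fun i1 _ => Finset.sum_congr rfl fun i2 _ =>
                Finset.sum_congr rfl fun j2 _ => (hN1 x2 i1 j2 i1 i10 i2 y).symm]
          _ = (k1 : ℝ) * ∑ x1, ∑ i1, ∑ i2, ∑ j2, P x1 x2 i1 j2 i1 i2 y :=
              congrArg _ (rot4 fun x1 i1 i2 j2 => P x1 x2 i1 j2 i1 i2 y).symm
      -- (C5)
      · intro x1 y
        calc ∑ x2, ∑ i1, ∑ i2, ∑ j1, ∑ j2, P x1 x2 j1 j2 i1 i2 y0
            = ∑ i1, ∑ i2, ∑ j1, ∑ j2, ∑ x2, P x1 x2 j1 j2 i1 i2 y0 := rot5 _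
          _ = ∑ i1, ∑ i2, ∑ j1, ∑ j2, ∑ x2, P x1 x2 j1 j2 i1 i20 y0 :=
              Finset.sum_congr rfl fun i1 _ => Finset.sum_congr rfl fun i2 _ =>
                Finset.sum_congr rfl fun j1 _ => Finset.sum_congr rfl fun j2 _ =>
                  hN2 x1 j1 j2 i1 i2 i20 y0
          _ = ∑ i1, (k2 : ℝ) * ∑ j1, ∑ j2, ∑ x2, P x1 x2 j1 j2 i1 i20 y0 := by
              refine Finset.sum_congr rfl fun i1 _ => ?_
              rw [Finset.sum_const, Finset.card_univ, Fintype.card_fin, nsmul_eq_mul]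
          _ = (k2 : ℝ) * ∑ i1, ∑ j1, ∑ j2, ∑ x2, P x1 x2 j1 j2 i1 i20 y0 := by
              rw [Finset.mul_sum]
          _ = (k2 : ℝ) * ∑ i1, ∑ j1, ∑ j2, ∑ x2, P x1 x2 j1 j2 i1 i20 y := by
              refine congrArg _ (Finset.sum_congr rfl fun i1 _ => ?_)
              rw [← rot3 fun x2 j1 j2 => P x1 x2 j1 j2 i1 i20 y0,
                ← rot3 fun x2 j1 j2 => P x1 x2 j1 j2 i1 i20 y]
              exact Finset.sum_congr rfl fun x2 _ => hNr x1 x2 i1 i20 y0 y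
          _ = (k2 : ℝ) * ∑ i1, ∑ i2, ∑ j1, ∑ x2, P x1 x2 j1 i2 i1 i20 y := by
              refine congrArg _ (Finset.sum_congr rfl fun i1 _ => ?_)
              exact Finset.sum_comm
          _ = (k2 : ℝ) * ∑ i1, ∑ i2, ∑ j1, ∑ x2, P x1 x2 j1 i2 i1 i2 y := by
              rw [Finset.sum_congr rfl fun i1 _ => Finset.sum_congr rfl fun i2 _ =>
                Finset.sum_congr rfl fun j1 _ => (hN2 x1 j1 i2 i1 i20 i2 y).symm]
          _ = (k2 : ℝ) * ∑ x2, ∑ i1, ∑ i2, ∑ j1, P x1 x2 j1 i2 i1 i2 y :=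
              congrArg _ (rot4 fun x2 i1 i2 j1 => P x1 x2 j1 i2 i1 i2 y).symm
      -- 0 ≤ r
      · intro x1 x2 y
        exact Finset.sum_nonneg fun i1 _ => Finset.sum_nonneg fun i2 _ =>
          hP0 x1 x2 i1 i2 i1 i2 y
      -- r ≤ r1
      · intro x1 x2 y
        refine Finset.sum_le_sum fun i1 _ => Finset.sum_le_sum fun i2 _ => ?_
        exact Finset.single_le_sum (f := fun j1 => P x1 x2 j1 i2 i1 i2 y)
          (fun j1 _ => hP0 x1 x2 j1 i2 i1 i2 y) (mem_univ i1)
      -- r1 ≤ p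
      · intro x1 x2 y
        dsimp only
        have hp : (∑ i1, ∑ i2, ∑ j1, ∑ j2, P x1 x2 j1 j2 i1 i2 y0)
            = ∑ i1, ∑ i2, ∑ j1, ∑ j2, P x1 x2 j1 j2 i1 i2 y :=
          Finset.sum_congr rfl fun i1 _ => Finset.sum_congr rfl fun i2 _ =>
            hNr x1 x2 i1 i2 y0 y
        rw [hp]
        refine Finset.sum_le_sum fun i1 _ => Finset.sum_le_sum fun i2 _ =>
          Finset.sum_le_sum fun j1 _ => ?_
        exact Finset.single_le_sum (f := fun j2 => P x1 x2 j1 j2 i1 i2 y)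
          (fun j2 _ => hP0 x1 x2 j1 j2 i1 i2 y) (mem_univ i2)
      -- r ≤ r2
      · intro x1 x2 y
        refine Finset.sum_le_sum fun i1 _ => Finset.sum_le_sum fun i2 _ => ?_
        exact Finset.single_le_sum (f := fun j2 => P x1 x2 i1 j2 i1 i2 y)
          (fun j2 _ => hP0 x1 x2 i1 j2 i1 i2 y) (mem_univ i2)
      -- r2 ≤ p
      · intro x1 x2 y
        dsimp only
        have hp : (∑ i1, ∑ i2, ∑ j1, ∑ j2, P x1 x2 j1 j2 i1 i2 y0)
            = ∑ i1, ∑ i2, ∑ j1, ∑ j2, P x1 x2 j1 j2 i1 i2 y :=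
          Finset.sum_congr rfl fun i1 _ => Finset.sum_congr rfl fun i2 _ =>
            hNr x1 x2 i1 i2 y0 y
        rw [hp]
        refine Finset.sum_le_sum fun i1 _ => Finset.sum_le_sum fun i2 _ => ?_
        exact Finset.single_le_sum (f := fun j1 => ∑ j2, P x1 x2 j1 j2 i1 i2 y)
          (fun j1 _ => Finset.sum_nonneg fun j2 _ => hP0 x1 x2 j1 j2 i1 i2 y)
          (mem_univ i1)
      -- inclusion-exclusion
      · intro x1 x2 y
        dsimp only
        have hp : (∑ i1, ∑ i2, ∑ j1, ∑ j2, P x1 x2 j1 j2 i1 i2 y0)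
            = ∑ i1, ∑ i2, ∑ j1, ∑ j2, P x1 x2 j1 j2 i1 i2 y :=
          Finset.sum_congr rfl fun i1 _ => Finset.sum_congr rfl fun i2 _ =>
            hNr x1 x2 i1 i2 y0 y
        rw [hp]
        have key : (∑ i1, ∑ i2, ∑ j1, ∑ j2, P x1 x2 j1 j2 i1 i2 y)
            - (∑ i1, ∑ i2, ∑ j1, P x1 x2 j1 i2 i1 i2 y)
            - (∑ i1, ∑ i2, ∑ j2, P x1 x2 i1 j2 i1 i2 y)
            + (∑ i1, ∑ i2, P x1 x2 i1 i2 i1 i2 y)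
            = ∑ i1, ∑ i2, ((∑ j1, ∑ j2, P x1 x2 j1 j2 i1 i2 y)
              - (∑ j1, P x1 x2 j1 i2 i1 i2 y)
              - (∑ j2, P x1 x2 i1 j2 i1 i2 y) + P x1 x2 i1 i2 i1 i2 y) := by
          simp only [Finset.sum_add_distrib, Finset.sum_sub_distrib]
        rw [key]
        exact Finset.sum_nonneg fun i1 _ => Finset.sum_nonneg fun i2 _ =>
          ie_nonneg (fun j1 j2 => P x1 x2 j1 j2 i1 i2 y)
            (fun j1 j2 => hP0 x1 x2 j1 j2 i1 i2 y) i1 i2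
      -- objective
      · rw [hs]
        congr 1
        calc ∑ i1, ∑ i2, ∑ x1, ∑ x2, ∑ y, W x1 x2 y * P x1 x2 i1 i2 i1 i2 y
            = ∑ x1, ∑ x2, ∑ y, ∑ i1, ∑ i2, W x1 x2 y * P x1 x2 i1 i2 i1 i2 y := by
              rw [rot5, rot5]
          _ = ∑ x1, ∑ x2, ∑ y, W x1 x2 y * ∑ i1, ∑ i2, P x1 x2 i1 i2 i1 i2 y := by
              simp only [Finset.mul_sum]
  · rintro ⟨r, r1, r2, p, h1, h2, h3, h4, h5, hr0, hrr1, hr1p, hrr2, hr2p, hie, hs⟩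
    have hk1R : (0:ℝ) < (k1:ℝ) := by exact_mod_cast hk1
    have hk2R : (0:ℝ) < (k2:ℝ) := by exact_mod_cast hk2
    have hK : (0:ℝ) < (k1:ℝ) * (k2:ℝ) := mul_pos hk1R hk2R
    have hK0 : ((k1:ℝ) * (k2:ℝ)) ≠ 0 := ne_of_gt hK
    have hd11 : k1 = 1 → ∀ x1 x2 y, r1 x1 x2 y = r x1 x2 y := by
      intro hk x1 x2 y
      have hsum := h2 x2 y
      rw [hk] at hsum
      push_cast at hsum
      rw [one_mul] at hsum
      exact ((Finset.sum_eq_sum_iff_of_le fun i _ => hrr1 i x2 y).mp hsum.symm x1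
        (mem_univ x1)).symm
    have hd12 : k1 = 1 → ∀ x1 x2 y, r2 x1 x2 y = p x1 x2 := by
      intro hk x1 x2 y
      have hsum := h4 x2 y
      rw [hk] at hsum
      push_cast at hsum
      rw [one_mul] at hsum
      exact (Finset.sum_eq_sum_iff_of_le fun i _ => hr2p i x2 y).mp hsum.symm x1 (mem_univ x1)
    have hd21 : k2 = 1 → ∀ x1 x2 y, r2 x1 x2 y = r x1 x2 y := by
      intro hk x1 x2 y
      have hsum := h3 x1 y
      rw [hk] at hsum
      push_cast at hsum
      rw [one_mul] at hsum
      exact ((Finset.sum_eq_sum_iff_of_le fun i _ => hrr2 x1 i y).mp hsum.symm x2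
        (mem_univ x2)).symm
    have hd22 : k2 = 1 → ∀ x1 x2 y, r1 x1 x2 y = p x1 x2 := by
      intro hk x1 x2 y
      have hsum := h5 x1 y
      rw [hk] at hsum
      push_cast at hsum
      rw [one_mul] at hsum
      exact (Finset.sum_eq_sum_iff_of_le fun i _ => hr1p x1 i y).mp hsum.symm x2 (mem_univ x2)
    have htot : ∀ (x1 : X1) (x2 : X2) (y : Y) (i1 : Fin k1) (i2 : Fin k2),
        ∑ j1, ∑ j2, boxOf k1 k2 r r1 r2 p x1 x2 j1 j2 i1 i2 y
          = p x1 x2 / ((k1:ℝ) * (k2:ℝ)) := fun x1 x2 y i1 i2 =>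
      boxOf_tot hk1 hk2 r r1 r2 p x1 x2 y (fun hk => hd21 hk x1 x2 y)
        (fun hk => hd22 hk x1 x2 y) (fun hk => hd12 hk x1 x2 y) i1 i2
    refine ⟨boxOf k1 k2 r r1 r2 p, ⟨?_, ?_, ?_, ?_, ?_⟩, ?_⟩
    -- nonneg
    · intro x1 x2 j1 j2 i1 i2 y
      have hk1R' : (0:ℝ) ≤ (k1:ℝ) - 1 := by
        have h' : (1:ℝ) ≤ (k1:ℝ) := by exact_mod_cast hk1
        linarith
      have hk2R' : (0:ℝ) ≤ (k2:ℝ) - 1 := by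
        have h' : (1:ℝ) ≤ (k2:ℝ) := by exact_mod_cast hk2
        linarith
      unfold boxOf
      by_cases hj1 : j1 = i1 <;> by_cases hj2 : j2 = i2 <;>
        simp only [hj1, hj2, if_pos, if_neg, if_true, if_false, not_false_iff]
      · exact div_nonneg (hr0 x1 x2 y) hK.le
      · exact div_nonneg (by linarith [hrr2 x1 x2 y]) (by positivity)
      · exact div_nonneg (by linarith [hrr1 x1 x2 y]) (by positivity)
      · exact div_nonneg (hie x1 x2 y) (by positivity)
    -- normalization
    · intro i1 i2 y
      rw [Finset.sum_congr rfl fun x1 _ => Finset.sum_congr rfl fun x2 _ =>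
        htot x1 x2 y i1 i2]
      rw [Finset.sum_congr rfl fun x1 _ => (Finset.sum_div univ (fun x2 => p x1 x2)
        ((k1:ℝ) * (k2:ℝ))).symm, ← Finset.sum_div]
      have hps : ∑ x1, ∑ x2, p x1 x2 = (k1:ℝ) * (k2:ℝ) := by
        have e1 : ∑ x1, ∑ x2, p x1 x2 = ∑ x2, ∑ x1, p x1 x2 := Finset.sum_comm
        have e2 : ∑ x2, ∑ x1, r2 x1 x2 y = ∑ x1, ∑ x2, r2 x1 x2 y := Finset.sum_comm
        rw [e1, Finset.sum_congr rfl fun x2 _ => h4 x2 y, ← Finset.mul_sum, e2,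
          Finset.sum_congr rfl fun x1 _ => h3 x1 y, ← Finset.mul_sum, h1 y]
        ring
      rw [hps, div_self hK0]
    -- NS1
    · intro x2 j1 j2 i1 i1' i2 y
      by_cases h : j1 = i1 <;> by_cases h' : j1 = i1'
      · subst h; subst h'; rfl
      · -- j1 = i1, j1 ≠ i1'
        have hii : i1 ≠ i1' := fun he => h' (he ▸ h)
        have hk1two : 2 ≤ k1 := fin2le hii
        have hne1 := cast_sub_one_ne hk1two
        unfold boxOf
        rw [Finset.sum_congr rfl fun x1 _ => if_pos h,
          Finset.sum_congr rfl fun x1 _ => if_neg h']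
        by_cases hj2 : j2 = i2
        · rw [Finset.sum_congr rfl fun x1 _ => if_pos hj2,
            Finset.sum_congr rfl fun x1 _ => if_pos hj2]
          rw [← Finset.sum_div, ← Finset.sum_div, Finset.sum_sub_distrib, h2 x2 y]
          have hk1ne : ((k1:ℝ)) ≠ 0 := Nat.cast_ne_zero.mpr hk1.ne'
          have hk2ne : ((k2:ℝ)) ≠ 0 := Nat.cast_ne_zero.mpr hk2.ne'
          field_simp
        · have hk2two : 2 ≤ k2 := fin2le hj2
          have hne2 := cast_sub_one_ne hk2two
          rw [Finset.sum_congr rfl fun x1 _ => if_neg hj2,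
            Finset.sum_congr rfl fun x1 _ => if_neg hj2]
          rw [← Finset.sum_div, ← Finset.sum_div]
          simp only [Finset.sum_add_distrib, Finset.sum_sub_distrib]
          rw [h2 x2 y, h4 x2 y]
          have hk1ne : ((k1:ℝ)) ≠ 0 := Nat.cast_ne_zero.mpr hk1.ne'
          have hk2ne : ((k2:ℝ)) ≠ 0 := Nat.cast_ne_zero.mpr hk2.ne'
          field_simp
          ring
      · -- j1 ≠ i1, j1 = i1'
        symm
        have hii : i1' ≠ i1 := fun he => h (he ▸ h')
        have hk1two : 2 ≤ k1 := fin2le hii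
        have hne1 := cast_sub_one_ne hk1two
        unfold boxOf
        rw [Finset.sum_congr rfl fun x1 _ => if_pos h',
          Finset.sum_congr rfl fun x1 _ => if_neg h]
        by_cases hj2 : j2 = i2
        · rw [Finset.sum_congr rfl fun x1 _ => if_pos hj2,
            Finset.sum_congr rfl fun x1 _ => if_pos hj2]
          rw [← Finset.sum_div, ← Finset.sum_div, Finset.sum_sub_distrib, h2 x2 y]
          have hk1ne : ((k1:ℝ)) ≠ 0 := Nat.cast_ne_zero.mpr hk1.ne'
          have hk2ne : ((k2:ℝ)) ≠ 0 := Nat.cast_ne_zero.mpr hk2.ne'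
          field_simp
        · have hk2two : 2 ≤ k2 := fin2le hj2
          have hne2 := cast_sub_one_ne hk2two
          rw [Finset.sum_congr rfl fun x1 _ => if_neg hj2,
            Finset.sum_congr rfl fun x1 _ => if_neg hj2]
          rw [← Finset.sum_div, ← Finset.sum_div]
          simp only [Finset.sum_add_distrib, Finset.sum_sub_distrib]
          rw [h2 x2 y, h4 x2 y]
          have hk1ne : ((k1:ℝ)) ≠ 0 := Nat.cast_ne_zero.mpr hk1.ne'
          have hk2ne : ((k2:ℝ)) ≠ 0 := Nat.cast_ne_zero.mpr hk2.ne'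
          field_simp
          ring
      · -- both false
        unfold boxOf
        rw [Finset.sum_congr rfl fun x1 _ => if_neg h,
          Finset.sum_congr rfl fun x1 _ => if_neg h']
    -- NS2
    · intro x1 j1 j2 i1 i2 i2' y
      by_cases h : j2 = i2 <;> by_cases h' : j2 = i2'
      · subst h; subst h'; rfl
      · -- j2 = i2, j2 ≠ i2'
        have hii : i2 ≠ i2' := fun he => h' (he ▸ h)
        have hk2two : 2 ≤ k2 := fin2le hii
        have hne2 := cast_sub_one_ne hk2two
        have hk1ne : ((k1:ℝ)) ≠ 0 := Nat.cast_ne_zero.mpr hk1.ne'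
        have hk2ne : ((k2:ℝ)) ≠ 0 := Nat.cast_ne_zero.mpr hk2.ne'
        rw [Finset.sum_congr rfl fun x2 _ => boxOf_eq2 r r1 r2 p x1 x2 y h,
          Finset.sum_congr rfl fun x2 _ => boxOf_ne2 r r1 r2 p x1 x2 y h']
        by_cases hj1 : j1 = i1
        · rw [Finset.sum_congr rfl fun x2 _ => if_pos hj1,
            Finset.sum_congr rfl fun x2 _ => if_pos hj1]
          rw [← Finset.sum_div, ← Finset.sum_div, Finset.sum_sub_distrib, h3 x1 y]
          field_simp
        · have hk1two : 2 ≤ k1 := fin2le hj1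
          have hne1 := cast_sub_one_ne hk1two
          rw [Finset.sum_congr rfl fun x2 _ => if_neg hj1,
            Finset.sum_congr rfl fun x2 _ => if_neg hj1]
          rw [← Finset.sum_div, ← Finset.sum_div]
          simp only [Finset.sum_add_distrib, Finset.sum_sub_distrib]
          rw [h3 x1 y, h5 x1 y]
          field_simp
          ring
      · -- j2 ≠ i2, j2 = i2'
        symm
        have hii : i2' ≠ i2 := fun he => h (he ▸ h')
        have hk2two : 2 ≤ k2 := fin2le hii
        have hne2 := cast_sub_one_ne hk2two
        have hk1ne : ((k1:ℝ)) ≠ 0 := Nat.cast_ne_zero.mpr hk1.ne'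
        have hk2ne : ((k2:ℝ)) ≠ 0 := Nat.cast_ne_zero.mpr hk2.ne'
        rw [Finset.sum_congr rfl fun x2 _ => boxOf_eq2 r r1 r2 p x1 x2 y h',
          Finset.sum_congr rfl fun x2 _ => boxOf_ne2 r r1 r2 p x1 x2 y h]
        by_cases hj1 : j1 = i1
        · rw [Finset.sum_congr rfl fun x2 _ => if_pos hj1,
            Finset.sum_congr rfl fun x2 _ => if_pos hj1]
          rw [← Finset.sum_div, ← Finset.sum_div, Finset.sum_sub_distrib, h3 x1 y]
          field_simp
        · have hk1two : 2 ≤ k1 := fin2le hj1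
          have hne1 := cast_sub_one_ne hk1two
          rw [Finset.sum_congr rfl fun x2 _ => if_neg hj1,
            Finset.sum_congr rfl fun x2 _ => if_neg hj1]
          rw [← Finset.sum_div, ← Finset.sum_div]
          simp only [Finset.sum_add_distrib, Finset.sum_sub_distrib]
          rw [h3 x1 y, h5 x1 y]
          field_simp
          ring
      · -- both false
        rw [Finset.sum_congr rfl fun x2 _ => boxOf_ne2 r r1 r2 p x1 x2 y h,
          Finset.sum_congr rfl fun x2 _ => boxOf_ne2 r r1 r2 p x1 x2 y h']
    -- NSr
    · intro x1 x2 i1 i2 y y'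
      rw [htot x1 x2 y i1 i2, htot x1 x2 y' i1 i2]
    -- objective
    · rw [hs]
      have hdiag : ∀ (i1 : Fin k1) (i2 : Fin k2),
          (∑ x1, ∑ x2, ∑ y, W x1 x2 y * boxOf k1 k2 r r1 r2 p x1 x2 i1 i2 i1 i2 y)
          = (∑ x1, ∑ x2, ∑ y, W x1 x2 y * r x1 x2 y) / ((k1:ℝ) * (k2:ℝ)) := by
        intro i1 i2
        rw [Finset.sum_congr rfl fun x1 _ => Finset.sum_congr rfl fun x2 _ =>
          Finset.sum_congr rfl fun y _ =>
            show W x1 x2 y * boxOf k1 k2 r r1 r2 p x1 x2 i1 i2 i1 i2 y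
              = W x1 x2 y * r x1 x2 y / ((k1:ℝ) * (k2:ℝ)) from by
              unfold boxOf
              rw [if_pos rfl, if_pos rfl]
              exact (mul_div_assoc _ _ _).symm]
        simp only [← Finset.sum_div]
      rw [Finset.sum_congr rfl fun i1 _ => Finset.sum_congr rfl fun i2 _ => hdiag i1 i2]
      simp only [Finset.sum_const, Finset.card_univ, Fintype.card_fin, nsmul_eq_mul]
      field_simp
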